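/- arXiv:0709.0785 — 2 statements merged into one kernel-verified Lean document; each statement's English description precedes it below -/
import Mathlib

section
/- Let Δₙ be the divided difference operator of type Dₙ associated to the simple root αₙ = t_{n−1} + tₙ, whose reflection sₙ sends t_{n−1} ↦ −tₙ, tₙ ↦ −t_{n−1} and fixes the other variables. Then for 1 ≤ k ≤ n−1, Δₙ(e_k(t₁,…,tₙ)) = 2·e_{k−1}(t₁,…,t_{n−2}). -/
open MvPolynomial

/-- The elementary symmetric polynomial `e_k` in the variables indexed by a
finite set `S`. -/
noncomputable def esymmOn {n : ℕ} (S : Finset (Fin n)) (k : ℕ) :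
    MvPolynomial (Fin n) ℤ :=
  ∑ A ∈ S.powersetCard k, ∏ i ∈ A, X i

lemma esymmOn_zero {n : ℕ} (S : Finset (Fin n)) : esymmOn S 0 = 1 := by
  simp [esymmOn]

lemma esymmOn_insert {n : ℕ} {T : Finset (Fin n)} {x : Fin n} (hx : x ∉ T) (k : ℕ) :
    esymmOn (insert x T) (k+1) = esymmOn T (k+1) + X x * esymmOn T k := by
  unfold esymmOn
  rw [Finset.powersetCard_succ_insert hx, Finset.sum_union, Finset.mul_sum,
    Finset.sum_image]
  · congr 1
    refine Finset.sum_congr rfl fun A hA => ?_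
    rw [Finset.prod_insert fun h => hx ((Finset.mem_powersetCard.mp hA).1 h)]
  · intro A hA B hB h
    have := congrArg (·.erase x) h
    simpa [Finset.erase_insert (fun h => hx ((Finset.mem_powersetCard.mp hA).1 h)),
      Finset.erase_insert (fun h => hx ((Finset.mem_powersetCard.mp hB).1 h))] using this
  · rw [Finset.disjoint_left]
    intro A hA hA'
    obtain ⟨B, hB, rfl⟩ := Finset.mem_image.mp hA'
    exact hx ((Finset.mem_powersetCard.mp hA).1 (Finset.mem_insert_self x B))

/-- Let `Δₙ` be the divided difference operator of type `Dₙ`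
associated to the simple root `αₙ = t_{n-1} + tₙ`, whose reflection `s` sends
`t_{n-1} ↦ -tₙ`, `tₙ ↦ -t_{n-1}` and fixes the other variables.  Then for
`1 ≤ k ≤ n-1`, `Δₙ(e_k(t₁,…,tₙ)) = 2·e_{k-1}(t₁,…,t_{n-2})`.  We encode
`Δₙ(e_k) = d` as `(t_{n-1} + tₙ) · d = e_k - s(e_k)`. -/
theorem stmt4 (n : ℕ) (hn : 2 ≤ n)
    (s : MvPolynomial (Fin n) ℤ →+* MvPolynomial (Fin n) ℤ)
    (hs : ∀ i : Fin n,
      s (X i) = if (i : ℕ) = n - 2 then -X (⟨n - 1, by omega⟩ : Fin n)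
        else if (i : ℕ) = n - 1 then -X (⟨n - 2, by omega⟩ : Fin n) else X i)
    (k : ℕ) (hk1 : 1 ≤ k) (hkn : k ≤ n - 1)
    (d : MvPolynomial (Fin n) ℤ)
    (hd : (X (⟨n - 2, by omega⟩ : Fin n) + X (⟨n - 1, by omega⟩ : Fin n)) * d =
      esymmOn Finset.univ k - s (esymmOn Finset.univ k)) :
    d = 2 * esymmOn (Finset.univ.filter (fun i : Fin n => (i : ℕ) < n - 2)) (k - 1) := by
  have ha' : n - 2 < n := by omega
  have hb' : n - 1 < n := by omega
  let a : Fin n := ⟨n - 2, ha'⟩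
  let b : Fin n := ⟨n - 1, hb'⟩
  set S := Finset.univ.filter (fun i : Fin n => (i : ℕ) < n - 2) with hSdef
  have hab : a ≠ b := Fin.ne_of_val_ne (by show n - 2 ≠ n - 1; omega)
  have hbS : b ∉ S := by
    simp only [hSdef, Finset.mem_filter, Finset.mem_univ, true_and]
    show ¬ n - 1 < n - 2
    omega
  have haS : a ∉ insert b S := by
    simp only [Finset.mem_insert, hSdef, Finset.mem_filter, Finset.mem_univ, true_and]
    rw [Fin.ext_iff]
    show ¬ (n - 2 = n - 1 ∨ n - 2 < n - 2)
    omega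
  have huniv : (Finset.univ : Finset (Fin n)) = insert a (insert b S) := by
    ext i
    simp only [Finset.mem_univ, Finset.mem_insert, hSdef, Finset.mem_filter,
      Fin.ext_iff, true_and, true_iff]
    show (i : ℕ) = n - 2 ∨ (i : ℕ) = n - 1 ∨ (i : ℕ) < n - 2
    omega
  have hsS : ∀ j, s (esymmOn S j) = esymmOn S j := by
    intro j
    unfold esymmOn
    rw [map_sum]
    refine Finset.sum_congr rfl fun A hA => ?_
    rw [map_prod]
    refine Finset.prod_congr rfl fun i hi => ?_
    have hiS : i ∈ S := (Finset.mem_powersetCard.mp hA).1 hi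
    have h2 : (i : ℕ) < n - 2 := by
      simpa only [hSdef, Finset.mem_filter, Finset.mem_univ, true_and] using hiS
    rw [hs i, if_neg (by omega), if_neg (by omega)]
  have hsa : s (X a) = - X b := by
    rw [hs a, if_pos rfl]
  have hsb : s (X b) = - X a := by
    rw [hs b]
    rw [if_neg (by show n - 1 ≠ n - 2; omega), if_pos rfl]
  have key : esymmOn Finset.univ k - s (esymmOn Finset.univ k)
      = (X a + X b) * (2 * esymmOn S (k - 1)) := by
    obtain ⟨m, rfl⟩ : ∃ m, k = m + 1 := ⟨k - 1, by omega⟩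
    rw [huniv]
    cases m with
    | zero =>
      rw [esymmOn_insert haS 0, esymmOn_insert hbS 0]
      simp only [map_add, map_mul, map_one, hsS, hsa, hsb, esymmOn_zero, Nat.add_sub_cancel]
      ring
    | succ m' =>
      rw [esymmOn_insert haS (m' + 1), esymmOn_insert hbS (m' + 1), esymmOn_insert hbS m']
      simp only [map_add, map_mul, hsS, hsa, hsb]
      simp only [Nat.add_sub_cancel]
      ring
  have hne : (X a + X b : MvPolynomial (Fin n) ℤ) ≠ 0 := by
    intro h
    have h2 := congrArg (eval (fun i => if i = a then (1 : ℤ) else 0)) h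
    simp [eval_X, Ne.symm hab] at h2
  have hd' : (X a + X b) * d = esymmOn Finset.univ k - s (esymmOn Finset.univ k) := hd
  exact mul_left_cancel₀ hne (by rw [hd', key])
end

section
/- Let A = ℤ[t₁,t₂,t₃,γ₃]/(c₁, c₂, c₃ − 2γ₃, γ₃²) where cᵢ = eᵢ(t₁,t₂,t₃). Then the quotient of A by the ideal generated by (the classes of) t₁, t₂, t₃ is isomorphic as a ring to ℤ[X]/(2X, X²). -/
open MvPolynomial

/-- `cᵢ = eᵢ(t₁,t₂,t₃)`, the elementary symmetric polynomials in the first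
three variables of `ℤ[t₁,t₂,t₃,γ₃]` (variables `X 0, X 1, X 2`; `γ₃ = X 3`). -/
noncomputable def c8 (k : ℕ) : MvPolynomial (Fin 4) ℤ :=
  ∑ A ∈ ({0, 1, 2} : Finset (Fin 4)).powersetCard k, ∏ i ∈ A, X i

/-- The ideal `(c₁, c₂, c₃ - 2γ₃, γ₃²)`. -/
noncomputable def I8 : Ideal (MvPolynomial (Fin 4) ℤ) :=
  Ideal.span {c8 1, c8 2, c8 3 - 2 * X 3, (X 3) ^ 2}

/-- `A = ℤ[t₁,t₂,t₃,γ₃]/(c₁, c₂, c₃ - 2γ₃, γ₃²)`, the integral cohomology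
ring of `G₂/T`. -/
noncomputable def A8 : Type := MvPolynomial (Fin 4) ℤ ⧸ I8

noncomputable instance : CommRing A8 := Ideal.Quotient.commRing I8

/-- The ideal of `A` generated by the classes of `t₁, t₂, t₃`. -/
noncomputable def J8 : Ideal A8 :=
  Ideal.span {Ideal.Quotient.mk I8 (X 0), Ideal.Quotient.mk I8 (X 1),
    Ideal.Quotient.mk I8 (X 2)}

lemma c8_1 : c8 1 = X 0 + X 1 + X 2 := by
  have h : ({0,1,2} : Finset (Fin 4)).powersetCard 1 = {{0},{1},{2}} := by decide
  rw [c8, h]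
  rw [show ({{0},{1},{2}} : Finset (Finset (Fin 4))) = insert {0} (insert {1} {{2}}) from rfl]
  rw [Finset.sum_insert (by decide), Finset.sum_insert (by decide), Finset.sum_singleton]
  simp
  ring

lemma c8_2 : c8 2 = X 0 * X 1 + X 0 * X 2 + X 1 * X 2 := by
  have h : ({0,1,2} : Finset (Fin 4)).powersetCard 2 = {{0,1},{0,2},{1,2}} := by decide
  rw [c8, h]
  rw [show ({{0,1},{0,2},{1,2}} : Finset (Finset (Fin 4))) = insert {0,1} (insert {0,2} {{1,2}}) from rfl]
  rw [Finset.sum_insert (by decide), Finset.sum_insert (by decide), Finset.sum_singleton]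
  rw [show ({0,1} : Finset (Fin 4)) = insert 0 {1} from rfl,
      show ({0,2} : Finset (Fin 4)) = insert 0 {2} from rfl,
      show ({1,2} : Finset (Fin 4)) = insert 1 {2} from rfl]
  rw [Finset.prod_insert (by decide), Finset.prod_insert (by decide), Finset.prod_insert (by decide)]
  simp
  ring

lemma c8_3 : c8 3 = X 0 * X 1 * X 2 := by
  have h : ({0,1,2} : Finset (Fin 4)).powersetCard 3 = {{0,1,2}} := by decide
  rw [c8, h, Finset.sum_singleton,
    show ({0,1,2} : Finset (Fin 4)) = insert 0 (insert 1 {2}) from rfl,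
    Finset.prod_insert (by decide), Finset.prod_insert (by decide), Finset.prod_singleton, mul_assoc]

noncomputable def K8 : Ideal (MvPolynomial (Fin 4) ℤ) := Ideal.span {X 0, X 1, X 2}
noncomputable def L8 : Ideal (MvPolynomial (Fin 4) ℤ) := I8 ⊔ K8
noncomputable def M8 : Ideal (Polynomial ℤ) :=
  Ideal.span ({2 * Polynomial.X, Polynomial.X ^ 2} : Set (Polynomial ℤ))

lemma hJ8 : J8 = Ideal.map (Ideal.Quotient.mk I8) K8 := by
  rw [J8, K8, Ideal.map_span]
  congr 1
  simp [Set.image_insert_eq]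
  rfl

noncomputable def E1 : (A8 ⧸ J8) ≃+* MvPolynomial (Fin 4) ℤ ⧸ L8 := by
  rw [hJ8]; exact DoubleQuot.quotQuotEquivQuotSup I8 K8

noncomputable def v8 : Fin 4 → Polynomial ℤ := ![0, 0, 0, Polynomial.X]

noncomputable def φ8 : MvPolynomial (Fin 4) ℤ →+* Polynomial ℤ := (aeval v8).toRingHom
noncomputable def ψ8 : Polynomial ℤ →+* MvPolynomial (Fin 4) ℤ :=
  (Polynomial.aeval (X 3 : MvPolynomial (Fin 4) ℤ)).toRingHom

lemma X0_mem_K8 : (X 0 : MvPolynomial (Fin 4) ℤ) ∈ K8 := Ideal.subset_span (by simp)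
lemma X1_mem_K8 : (X 1 : MvPolynomial (Fin 4) ℤ) ∈ K8 := Ideal.subset_span (by simp)
lemma X2_mem_K8 : (X 2 : MvPolynomial (Fin 4) ℤ) ∈ K8 := Ideal.subset_span (by simp)

lemma hkerf : L8 ≤ RingHom.ker ((Ideal.Quotient.mk M8).comp φ8) := by
  rw [L8]
  apply sup_le
  · rw [I8, Ideal.span_le]
    rintro p hp
    simp only [Set.mem_insert_iff, Set.mem_singleton_iff] at hp
    simp only [SetLike.mem_coe, RingHom.mem_ker, RingHom.comp_apply]
    rcases hp with rfl | rfl | rfl | rfl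
    · have h : φ8 (c8 1) = 0 := by simp [φ8, c8_1, v8]
      rw [h, map_zero]
    · have h : φ8 (c8 2) = 0 := by simp [φ8, c8_2, v8]
      rw [h, map_zero]
    · have h : φ8 (c8 3 - 2 * X 3) = -(2 * Polynomial.X) := by
        simp [φ8, c8_3, v8, map_ofNat]
      rw [h, Ideal.Quotient.eq_zero_iff_mem]
      exact neg_mem (Ideal.subset_span (by simp [M8]))
    · have h : φ8 (X 3 ^ 2) = Polynomial.X ^ 2 := by simp [φ8, v8]
      rw [h, Ideal.Quotient.eq_zero_iff_mem]
      exact Ideal.subset_span (by simp [M8])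
  · rw [K8, Ideal.span_le]
    rintro p hp
    simp only [Set.mem_insert_iff, Set.mem_singleton_iff] at hp
    rcases hp with rfl | rfl | rfl <;> simp [RingHom.mem_ker, φ8, v8]

lemma hkerg : M8 ≤ RingHom.ker ((Ideal.Quotient.mk L8).comp ψ8) := by
  rw [M8, Ideal.span_le]
  rintro p hp
  simp only [Set.mem_insert_iff, Set.mem_singleton_iff] at hp
  have h2X3 : (2 * X 3 : MvPolynomial (Fin 4) ℤ) ∈ L8 := by
    have h1 : c8 3 - 2 * X 3 ∈ L8 :=
      Ideal.mem_sup_left (Ideal.subset_span (by simp) : _ ∈ I8)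
    have h2 : c8 3 ∈ L8 := by
      rw [c8_3]
      exact Ideal.mem_sup_right (Ideal.mul_mem_left _ _ X2_mem_K8)
    simpa using L8.sub_mem h2 h1
  simp only [SetLike.mem_coe, RingHom.mem_ker, RingHom.comp_apply]
  rcases hp with rfl | rfl
  · have hψ : ψ8 (2 * Polynomial.X) = 2 * X 3 := by simp [ψ8, map_ofNat]
    rw [hψ, Ideal.Quotient.eq_zero_iff_mem]
    exact h2X3
  · have hψ : ψ8 (Polynomial.X ^ 2) = X 3 ^ 2 := by simp [ψ8]
    rw [hψ, Ideal.Quotient.eq_zero_iff_mem]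
    exact Ideal.mem_sup_left (Ideal.subset_span (by simp) : _ ∈ I8)

noncomputable def f8 : MvPolynomial (Fin 4) ℤ ⧸ L8 →+* Polynomial ℤ ⧸ M8 :=
  Ideal.Quotient.lift L8 ((Ideal.Quotient.mk M8).comp φ8) hkerf
noncomputable def g8 : Polynomial ℤ ⧸ M8 →+* MvPolynomial (Fin 4) ℤ ⧸ L8 :=
  Ideal.Quotient.lift M8 ((Ideal.Quotient.mk L8).comp ψ8) hkerg

noncomputable def E2 : (MvPolynomial (Fin 4) ℤ ⧸ L8) ≃+* Polynomial ℤ ⧸ M8 := by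
  refine RingEquiv.ofRingHom f8 g8 ?_ ?_
  · apply Ideal.Quotient.ringHom_ext
    apply Polynomial.ringHom_ext
    · intro a
      simp [f8, g8, ψ8, φ8]
    · simp [f8, g8, ψ8, φ8, v8]
  · apply Ideal.Quotient.ringHom_ext
    apply MvPolynomial.ringHom_ext
    · intro a
      simp [f8, g8, ψ8, φ8]
    · intro i
      fin_cases i
      · have h : φ8 (X (0 : Fin 4)) = 0 := by simp [φ8, v8]
        have hm : (X (0 : Fin 4) : MvPolynomial (Fin 4) ℤ) ∈ L8 := by
          rw [L8]; exact Ideal.mem_sup_right X0_mem_K8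
        show (Ideal.Quotient.mk L8) (ψ8 (φ8 (X 0))) = (Ideal.Quotient.mk L8) (X 0)
        rw [h, map_zero, map_zero]
        exact (Ideal.Quotient.eq_zero_iff_mem.mpr hm).symm
      · have h : φ8 (X (1 : Fin 4)) = 0 := by simp [φ8, v8]
        have hm : (X (1 : Fin 4) : MvPolynomial (Fin 4) ℤ) ∈ L8 := by
          rw [L8]; exact Ideal.mem_sup_right X1_mem_K8
        show (Ideal.Quotient.mk L8) (ψ8 (φ8 (X 1))) = (Ideal.Quotient.mk L8) (X 1)
        rw [h, map_zero, map_zero]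
        exact (Ideal.Quotient.eq_zero_iff_mem.mpr hm).symm
      · have h : φ8 (X (2 : Fin 4)) = 0 := by simp [φ8, v8]
        have hm : (X (2 : Fin 4) : MvPolynomial (Fin 4) ℤ) ∈ L8 := by
          rw [L8]; exact Ideal.mem_sup_right X2_mem_K8
        show (Ideal.Quotient.mk L8) (ψ8 (φ8 (X 2))) = (Ideal.Quotient.mk L8) (X 2)
        rw [h, map_zero, map_zero]
        exact (Ideal.Quotient.eq_zero_iff_mem.mpr hm).symm
      · simp [f8, g8, ψ8, φ8, v8]

/-- The quotient of `A = ℤ[t₁,t₂,t₃,γ₃]/(c₁, c₂, c₃-2γ₃, γ₃²)`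
by the ideal generated by the classes of `t₁, t₂, t₃` is isomorphic as a ring
to `ℤ[X]/(2X, X²)` (the Chow ring of the algebraic group `G₂`). -/
theorem stmt8 :
    Nonempty ((A8 ⧸ J8) ≃+*
      (Polynomial ℤ ⧸ Ideal.span ({2 * Polynomial.X, Polynomial.X ^ 2} : Set (Polynomial ℤ)))) :=
  ⟨E1.trans E2⟩
end
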